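/- Let C be a category with finite limits and strict initial objects whose terminal object is an extremal generator. Let D be a category with finite limits and strict initial objects whose initial object is not isomorphic to its terminal object. Let F : C ⥤ D be a functor preserving finite limits and initial objects. Then for every object X of C, the map sending a global element x : ⊤_C ⟶ X to F.map x : F.obj ⊤_C ⟶ F.obj X is injective. -/
import Mathlib


open CategoryTheory CategoryTheory.Limits

universe v₁ u₁ v₂ u₂

/-- A finite-limit- and initial-object-preserving functor out of a category
with finite limits and strict initial objects whose terminal object is an extremal
generator, into a category with finite limits and strict initial objects whose initial
object is not isomorphic to its terminal object, is injective on global elements. -/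
theorem injective_on_global_elements
    {C : Type u₁} [Category.{v₁} C] [HasFiniteLimits C]
    [HasInitial C] [HasStrictInitialObjects C]
    (hgen : ∀ {A B : C} (f g : A ⟶ B), (∀ x : ⊤_ C ⟶ A, x ≫ f = x ≫ g) → f = g)
    (hext : ∀ {A B : C} (m : A ⟶ B), Mono m →
      (∀ x : ⊤_ C ⟶ B, ∃ y : ⊤_ C ⟶ A, y ≫ m = x) → IsIso m)
    {D : Type u₂} [Category.{v₂} D] [HasFiniteLimits D]
    [HasInitial D] [HasStrictInitialObjects D]
    (hD : IsEmpty ((⊥_ D) ≅ (⊤_ D)))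
    (F : C ⥤ D) [PreservesFiniteLimits F] [PreservesColimit (Functor.empty.{0} C) F]
    (X : C) :
    Function.Injective (fun x : ⊤_ C ⟶ X => F.map x) := by
  intro x y h
  simp only at h
  by_cases hE : Nonempty (⊤_ C ⟶ equalizer x y)
  · obtain ⟨t⟩ := hE
    have ht : t ≫ equalizer.ι x y = 𝟙 _ := Subsingleton.elim _ _
    calc x = (t ≫ equalizer.ι x y) ≫ x := by rw [ht, Category.id_comp]
    _ = (t ≫ equalizer.ι x y) ≫ y := by
        rw [Category.assoc, Category.assoc, equalizer.condition]
    _ = y := by rw [ht, Category.id_comp]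
  · exfalso
    have hiso : IsIso (initial.to (equalizer x y)) :=
      hext _ inferInstance fun z => absurd ⟨z⟩ hE
    have hinit : IsInitial (equalizer x y) :=
      IsInitial.ofIso initialIsInitial (asIso (initial.to (equalizer x y)))
    have hinitF : IsInitial (F.obj (equalizer x y)) := hinit.isInitialObj F _
    have hfork := isLimitOfHasEqualizerOfPreservesLimit F x y
    have hiso2 : IsIso (F.map (equalizer.ι x y)) :=
      isIso_limit_cone_parallelPair_of_eq h hfork
    have htermF : IsTerminal (F.obj (⊤_ C)) :=
      terminalIsTerminal.isTerminalObj F _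
    exact hD.elim <|
      initialIsoIsInitial hinitF ≪≫ asIso (F.map (equalizer.ι x y)) ≪≫
        htermF.uniqueUpToIso terminalIsTerminal
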